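/- Let G be an r-regular simple graph with n vertices and m edges, where r ≥ 2 (so that m ≥ n), and let q_1 ≤ q_2 ≤ … ≤ q_n = 2r be the eigenvalues of Q(G) listed with multiplicity. Then f(λ, G^{+++}) = (λ-3r+2)(λ-4r)·(λ-2r+2)^{m-n}·∏_{i=1}^{n-1}[(λ-r-q_i)(λ-2r+2-q_i) - q_i]. -/

import Mathlib

open Classical

/-- The four symbols `0, 1, +, -` used in `xyz`-transformations. -/
inductive XYZ : Type
  | zero | one | plus | minus

namespace XYZ

/-- The relation on the vertices of a graph `H` given by a symbol:
`0` gives the empty graph, `1` the complete graph, `+` the graph itself,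
`-` its complement. -/
def rel {W : Type*} (H : SimpleGraph W) : XYZ → W → W → Prop
  | .zero => fun _ _ => False
  | .one  => fun u v => u ≠ v
  | .plus => fun u v => H.Adj u v
  | .minus => fun u v => u ≠ v ∧ ¬ H.Adj u v

/-- The incidence relation between a vertex and an edge given by a symbol `z`:
`+` means incident, `-` means non-incident, `0` never, `1` always. -/
def inc {W : Type*} (G : SimpleGraph W) : XYZ → W → G.edgeSet → Prop
  | .zero => fun _ _ => False
  | .one  => fun _ _ => True
  | .plus => fun v e => v ∈ (e : Sym2 W)
  | .minus => fun v e => v ∉ (e : Sym2 W)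

theorem rel_symm {W : Type*} (H : SimpleGraph W) (x : XYZ) {u v : W}
    (h : rel H x u v) : rel H x v u := by
  cases x with
  | zero => exact h.elim
  | one => exact (h : u ≠ v).symm
  | plus => exact H.adj_symm h
  | minus => exact ⟨(h.1).symm, fun h' => h.2 (H.adj_symm h')⟩

theorem rel_irrefl {W : Type*} (H : SimpleGraph W) (x : XYZ) {u : W}
    (h : rel H x u u) : False := by
  cases x with
  | zero => exact h
  | one => exact h rfl
  | plus => exact H.irrefl h
  | minus => exact h.1 rfl

end XYZ

/-- The `xyz`-transformation `G^{xyz}` of a graph `G`: its vertex set is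
`V(G) ⊕ E(G)`; two vertices of `G` are adjacent according to the symbol `x`
(applied to `G`), two edges according to the symbol `y` (applied to the line
graph of `G`), and a vertex and an edge according to the symbol `z`
(`+` = incidence graph `B(G)`, `-` = non-incidence graph `B^c(G)`,
`0` = no vertex-edge edges, `1` = all vertex-edge edges). -/
def xyzTransform {V : Type*} (G : SimpleGraph V) (x y z : XYZ) :
    SimpleGraph (V ⊕ G.edgeSet) where
  Adj a b :=
    match a, b with
    | Sum.inl u, Sum.inl v => XYZ.rel G x u v
    | Sum.inr e, Sum.inr f => XYZ.rel G.lineGraph y e f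
    | Sum.inl v, Sum.inr e => XYZ.inc G z v e
    | Sum.inr e, Sum.inl v => XYZ.inc G z v e
  symm := by
    constructor
    rintro (u | e) (v | f) h
    · exact XYZ.rel_symm G x h
    · exact h
    · exact h
    · exact XYZ.rel_symm G.lineGraph y h
  loopless := by
    constructor
    rintro (u | e) h
    · exact XYZ.rel_irrefl G x h
    · exact XYZ.rel_irrefl G.lineGraph y h

/-- The signless Laplacian matrix `Q(G) = D(G) + A(G)` of a graph. -/
noncomputable def signlessLaplacian {V : Type*} [Fintype V] (G : SimpleGraph V) :
    Matrix V V ℝ :=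
  Matrix.of fun u v =>
    (if u = v then (G.degree u : ℝ) else 0) + (if G.Adj u v then 1 else 0)

/-- The signless Laplacian characteristic polynomial
`f(λ, G) = det (λ I - Q(G))`, evaluated at a real number `λ`. -/
noncomputable def fQ {V : Type*} [Fintype V] (G : SimpleGraph V) (lam : ℝ) : ℝ :=
  Matrix.det (lam • (1 : Matrix V V ℝ) - signlessLaplacian G)


open Matrix


section Counting
variable {V : Type*} [Fintype V] (G : SimpleGraph V)

lemma card_filter_incid (v : V) :
    (Finset.univ.filter fun e : G.edgeSet => v ∈ (e : Sym2 V)).card = G.degree v := by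
  classical
  rw [← G.card_incidenceFinset_eq_degree v]
  refine Finset.card_bij (fun (e : G.edgeSet) _ => (e : Sym2 V)) ?_ ?_ ?_
  · intro e he
    simp only [Finset.mem_filter] at he
    rw [SimpleGraph.mem_incidenceFinset]
    exact ⟨e.2, he.2⟩
  · intro e he f hf h
    exact Subtype.ext h
  · intro s hs
    rw [SimpleGraph.mem_incidenceFinset] at hs
    exact ⟨⟨s, hs.1⟩, by simp [hs.2], rfl⟩

lemma card_filter_mem_edge (e : G.edgeSet) :
    (Finset.univ.filter fun v : V => v ∈ (e : Sym2 V)).card = 2 := by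
  classical
  obtain ⟨e, he⟩ := e
  induction e with
  | _ a b =>
    have hab : a ≠ b := (G.mem_edgeSet.mp he).ne
    have : (Finset.univ.filter fun v : V => v ∈ s(a, b)) = {a, b} := by
      ext v; simp [Sym2.mem_iff]
    rw [this, Finset.card_insert_of_notMem (by simp [hab]), Finset.card_singleton]

lemma card_filter_two_mem (u v : V) (huv : u ≠ v) :
    (Finset.univ.filter fun e : G.edgeSet => u ∈ (e : Sym2 V) ∧ v ∈ (e : Sym2 V)).card
      = if G.Adj u v then 1 else 0 := by
  classical
  split_ifs with h
  · rw [Finset.card_eq_one]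
    refine ⟨⟨s(u, v), h⟩, ?_⟩
    ext e
    simp only [Finset.mem_filter, Finset.mem_univ, true_and, Finset.mem_singleton]
    constructor
    · rintro ⟨h1, h2⟩
      exact Subtype.ext ((Sym2.mem_and_mem_iff huv).mp ⟨h1, h2⟩)
    · rintro rfl
      simp [Sym2.mem_iff]
  · rw [Finset.card_eq_zero]
    ext e
    simp only [Finset.mem_filter, Finset.mem_univ, true_and, Finset.notMem_empty,
      iff_false, not_and]
    intro h1 h2
    have := (Sym2.mem_and_mem_iff huv).mp ⟨h1, h2⟩
    exact h (G.mem_edgeSet.mp (this ▸ e.2))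

lemma card_filter_shared (e f : G.edgeSet) (hef : e ≠ f) :
    (Finset.univ.filter fun v : V => v ∈ (e : Sym2 V) ∧ v ∈ (f : Sym2 V)).card
      = if G.lineGraph.Adj e f then 1 else 0 := by
  classical
  have hle : (Finset.univ.filter fun v : V => v ∈ (e : Sym2 V) ∧ v ∈ (f : Sym2 V)).card ≤ 1 := by
    apply Finset.card_le_one.mpr
    intro a ha b hb
    simp only [Finset.mem_filter] at ha hb
    by_contra hab
    have he' : (e : Sym2 V) = s(a, b) := (Sym2.mem_and_mem_iff hab).mp ⟨ha.2.1, hb.2.1⟩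
    have hf' : (f : Sym2 V) = s(a, b) := (Sym2.mem_and_mem_iff hab).mp ⟨ha.2.2, hb.2.2⟩
    exact hef (Subtype.ext (he'.trans hf'.symm))
  split_ifs with h
  · rw [SimpleGraph.lineGraph_adj_iff_exists] at h
    obtain ⟨-, v, hv1, hv2⟩ := h
    have h1 : 1 ≤ (Finset.univ.filter
        fun v : V => v ∈ (e : Sym2 V) ∧ v ∈ (f : Sym2 V)).card := by
      rw [Nat.succ_le_iff, Finset.card_pos]
      exact ⟨v, by simp [hv1, hv2]⟩
    omega
  · rw [Finset.card_eq_zero]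
    ext v
    simp only [Finset.mem_filter, Finset.mem_univ, true_and, Finset.notMem_empty, iff_false,
      not_and]
    intro h1 h2
    exact h (SimpleGraph.lineGraph_adj_iff_exists.mpr ⟨hef, v, h1, h2⟩)

end Counting

section IncMat
variable {V : Type*} [Fintype V] (G : SimpleGraph V)

/-- Incidence matrix of `G` over `ℝ`, indexed by vertices and edges. -/
noncomputable def incMat : Matrix V G.edgeSet ℝ :=
  Matrix.of fun v e => if v ∈ (e : Sym2 V) then 1 else 0

lemma incMat_rowsum (v : V) : ∑ e : G.edgeSet, incMat G v e = (G.degree v : ℝ) := by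
  classical
  simp only [incMat, Matrix.of_apply]
  rw [Finset.sum_boole, ← card_filter_incid G v]

lemma incMat_colsum (e : G.edgeSet) : ∑ v : V, incMat G v e = 2 := by
  classical
  simp only [incMat, Matrix.of_apply]
  rw [Finset.sum_boole, card_filter_mem_edge G e]
  norm_num

lemma incMat_mul_transpose : incMat G * (incMat G)ᵀ = signlessLaplacian G := by
  classical
  ext u v
  simp only [Matrix.mul_apply, Matrix.transpose_apply, incMat, Matrix.of_apply,
    signlessLaplacian, ite_mul, one_mul, zero_mul]
  have : ∀ e : G.edgeSet,
      (if u ∈ (e : Sym2 V) then if v ∈ (e : Sym2 V) then (1:ℝ) else 0 else 0)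
      = if u ∈ (e : Sym2 V) ∧ v ∈ (e : Sym2 V) then (1:ℝ) else 0 := by
    intro e; split_ifs with h1 h2 h3 h4 <;> simp_all
  rw [Finset.sum_congr rfl fun e _ => this e, Finset.sum_boole]
  by_cases huv : u = v
  · subst huv
    simp only [and_self]
    rw [card_filter_incid G u]
    simp [G.loopless.irrefl u]
  · rw [card_filter_two_mem G u v huv, if_neg huv]
    split_ifs <;> norm_num

lemma transpose_mul_incMat :
    (incMat G)ᵀ * incMat G
      = (Matrix.of fun e f => if G.lineGraph.Adj e f then (1:ℝ) else 0) + 2 • 1 := by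
  classical
  ext e f
  simp only [Matrix.mul_apply, Matrix.transpose_apply, incMat, Matrix.of_apply,
    Matrix.add_apply, Matrix.smul_apply, Matrix.one_apply, ite_mul, one_mul, zero_mul]
  have : ∀ v : V,
      (if v ∈ (e : Sym2 V) then if v ∈ (f : Sym2 V) then (1:ℝ) else 0 else 0)
      = if v ∈ (e : Sym2 V) ∧ v ∈ (f : Sym2 V) then (1:ℝ) else 0 := by
    intro v; split_ifs with h1 h2 h3 h4 <;> simp_all
  rw [Finset.sum_congr rfl fun v _ => this v, Finset.sum_boole]
  by_cases hef : e = f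
  · subst hef
    simp only [and_self]
    rw [card_filter_mem_edge G e]
    simp [G.lineGraph.loopless.irrefl e]
  · rw [card_filter_shared G e f hef, if_neg hef]
    split_ifs <;> norm_num

end IncMat



section Degrees
variable {V : Type*} [Fintype V] (G : SimpleGraph V)

lemma degree_real {W : Type*} [Fintype W] (H : SimpleGraph W) (w : W) :
    (H.degree w : ℝ) = ∑ y : W, if H.Adj w y then (1:ℝ) else 0 := by
  classical
  rw [Finset.sum_boole]
  congr 1
  rw [← SimpleGraph.card_neighborFinset_eq_degree]
  congr 1
  ext y
  simp [SimpleGraph.mem_neighborFinset]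

lemma lineGraph_degree_real {r : ℕ} (hreg : G.IsRegularOfDegree r) (e : G.edgeSet) :
    ((G.lineGraph).degree e : ℝ) = 2 * r - 2 := by
  classical
  rw [degree_real]
  have h2 : ∀ f : G.edgeSet, (if G.lineGraph.Adj e f then (1:ℝ) else 0)
      = ((incMat G)ᵀ * incMat G) e f - 2 * (if e = f then (1:ℝ) else 0) := by
    intro f
    rw [transpose_mul_incMat]
    simp only [Matrix.add_apply, Matrix.smul_apply, Matrix.one_apply, Matrix.of_apply]
    split_ifs <;> push_cast <;> ring
  rw [Finset.sum_congr rfl fun f _ => h2 f, Finset.sum_sub_distrib]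
  have h3 : ∑ f : G.edgeSet, ((incMat G)ᵀ * incMat G) e f = 2 * r := by
    simp only [Matrix.mul_apply, Matrix.transpose_apply]
    rw [Finset.sum_comm]
    have : ∀ v : V, ∑ f : G.edgeSet, incMat G v e * incMat G v f
        = incMat G v e * (G.degree v : ℝ) := by
      intro v
      rw [← Finset.mul_sum, incMat_rowsum]
    rw [Finset.sum_congr rfl fun v _ => this v]
    have : ∀ v : V, incMat G v e * (G.degree v : ℝ) = incMat G v e * r := by
      intro v; rw [hreg v]
    rw [Finset.sum_congr rfl fun v _ => this v, ← Finset.sum_mul, incMat_colsum]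
  rw [h3]
  simp

lemma transform_degree_inl {r : ℕ} (hreg : G.IsRegularOfDegree r) (u : V) :
    ((xyzTransform G XYZ.plus XYZ.plus XYZ.plus).degree (Sum.inl u) : ℝ) = 2 * r := by
  classical
  rw [degree_real, Fintype.sum_sum_type]
  have h1 : ∀ v : V, (if (xyzTransform G XYZ.plus XYZ.plus XYZ.plus).Adj (Sum.inl u) (Sum.inl v)
      then (1:ℝ) else 0) = if G.Adj u v then (1:ℝ) else 0 := by
    intro v
    simp [xyzTransform, XYZ.rel]
    congr
  have h2 : ∀ e : G.edgeSet,
      (if (xyzTransform G XYZ.plus XYZ.plus XYZ.plus).Adj (Sum.inl u) (Sum.inr e)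
      then (1:ℝ) else 0) = incMat G u e := by
    intro e
    simp [xyzTransform, XYZ.inc, incMat]
    congr
  rw [Finset.sum_congr rfl fun v _ => h1 v, Finset.sum_congr rfl fun e _ => h2 e,
    incMat_rowsum, ← degree_real, hreg u]
  ring

lemma transform_degree_inr {r : ℕ} (hreg : G.IsRegularOfDegree r) (e : G.edgeSet) :
    ((xyzTransform G XYZ.plus XYZ.plus XYZ.plus).degree (Sum.inr e) : ℝ) = 2 * r := by
  classical
  rw [degree_real, Fintype.sum_sum_type]
  have h1 : ∀ v : V, (if (xyzTransform G XYZ.plus XYZ.plus XYZ.plus).Adj (Sum.inr e) (Sum.inl v)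
      then (1:ℝ) else 0) = incMat G v e := by
    intro v
    simp [xyzTransform, XYZ.inc, incMat]
    congr
  have h2 : ∀ f : G.edgeSet,
      (if (xyzTransform G XYZ.plus XYZ.plus XYZ.plus).Adj (Sum.inr e) (Sum.inr f)
      then (1:ℝ) else 0) = if G.lineGraph.Adj e f then (1:ℝ) else 0 := by
    intro f
    simp [xyzTransform, XYZ.rel]
    congr
  rw [Finset.sum_congr rfl fun v _ => h1 v, Finset.sum_congr rfl fun f _ => h2 f,
    incMat_colsum, ← degree_real, lineGraph_degree_real G hreg e]
  ring

lemma block_decomp {r : ℕ} (hreg : G.IsRegularOfDegree r) (lam : ℝ) :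
    fQ (xyzTransform G XYZ.plus XYZ.plus XYZ.plus) lam
      = (Matrix.fromBlocks
          ((lam - r) • 1 - incMat G * (incMat G)ᵀ) (-(incMat G))
          (-((incMat G)ᵀ)) ((lam - 2 * r + 2) • 1 - (incMat G)ᵀ * incMat G)).det := by
  classical
  rw [fQ]
  congr 1
  ext x y
  cases x with
  | inl u =>
    cases y with
    | inl v =>
      simp only [Matrix.sub_apply, Matrix.smul_apply, Matrix.one_apply, signlessLaplacian,
        Matrix.of_apply, Matrix.fromBlocks_apply₁₁, incMat_mul_transpose]
      by_cases huv : u = v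
      · subst huv
        rw [if_pos rfl, if_pos rfl, if_pos rfl, transform_degree_inl G hreg u]
        have : ¬ (xyzTransform G XYZ.plus XYZ.plus XYZ.plus).Adj (Sum.inl u) (Sum.inl u) :=
          (xyzTransform G XYZ.plus XYZ.plus XYZ.plus).loopless.irrefl _
        rw [if_neg this, if_neg (G.loopless.irrefl u), hreg u]
        push_cast
        simp only [smul_eq_mul, mul_one, if_true]
        ring
      · have hne : (Sum.inl u : V ⊕ G.edgeSet) ≠ Sum.inl v := by simp [huv]
        have : (xyzTransform G XYZ.plus XYZ.plus XYZ.plus).Adj (Sum.inl u) (Sum.inl v)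
            ↔ G.Adj u v := Iff.rfl
        rw [if_congr this rfl rfl]
        simp [hne, huv]
    | inr e =>
      simp only [Matrix.sub_apply, Matrix.smul_apply, Matrix.one_apply, signlessLaplacian,
        Matrix.of_apply, Matrix.fromBlocks_apply₁₂, Matrix.neg_apply, incMat]
      rw [if_neg (by simp : ¬ (Sum.inl u : V ⊕ G.edgeSet) = Sum.inr e),
        if_neg (by simp : ¬ (Sum.inl u : V ⊕ G.edgeSet) = Sum.inr e)]
      have : (xyzTransform G XYZ.plus XYZ.plus XYZ.plus).Adj (Sum.inl u) (Sum.inr e)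
          ↔ u ∈ (e : Sym2 V) := Iff.rfl
      rw [if_congr this rfl rfl]
      simp
  | inr e =>
    cases y with
    | inl v =>
      simp only [Matrix.sub_apply, Matrix.smul_apply, Matrix.one_apply, signlessLaplacian,
        Matrix.of_apply, Matrix.fromBlocks_apply₂₁, Matrix.neg_apply, Matrix.transpose_apply,
        incMat]
      rw [if_neg (by simp : ¬ (Sum.inr e : V ⊕ G.edgeSet) = Sum.inl v),
        if_neg (by simp : ¬ (Sum.inr e : V ⊕ G.edgeSet) = Sum.inl v)]
      have : (xyzTransform G XYZ.plus XYZ.plus XYZ.plus).Adj (Sum.inr e) (Sum.inl v)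
          ↔ v ∈ (e : Sym2 V) := Iff.rfl
      rw [if_congr this rfl rfl]
      simp
    | inr f =>
      simp only [Matrix.sub_apply, Matrix.smul_apply, Matrix.one_apply, signlessLaplacian,
        Matrix.of_apply, Matrix.fromBlocks_apply₂₂, transpose_mul_incMat, Matrix.add_apply]
      by_cases hef : e = f
      · subst hef
        rw [if_pos rfl, if_pos rfl, if_pos rfl, transform_degree_inr G hreg e]
        have : ¬ (xyzTransform G XYZ.plus XYZ.plus XYZ.plus).Adj (Sum.inr e) (Sum.inr e) :=
          (xyzTransform G XYZ.plus XYZ.plus XYZ.plus).loopless.irrefl _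
        rw [if_neg this, if_neg (G.lineGraph.loopless.irrefl e)]
        push_cast
        simp only [smul_eq_mul, mul_one, if_true]
        ring
      · have hne : (Sum.inr e : V ⊕ G.edgeSet) ≠ Sum.inr f := by simp [hef]
        have : (xyzTransform G XYZ.plus XYZ.plus XYZ.plus).Adj (Sum.inr e) (Sum.inr f)
            ↔ G.lineGraph.Adj e f := Iff.rfl
        rw [if_congr this rfl rfl]
        simp [hne, hef]

end Degrees


section DetLemmas

open Polynomial

lemma eval_charpoly' {R : Type*} [CommRing R] {ι : Type*} [DecidableEq ι] [Fintype ι]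
    (M : Matrix ι ι R) (x : R) :
    (Matrix.charpoly M).eval x = (x • (1 : Matrix ι ι R) - M).det := by
  rw [Matrix.charpoly, ← Polynomial.coe_evalRingHom, RingHom.map_det]
  congr 1
  ext i j
  by_cases hij : i = j <;>
    simp [Matrix.charmatrix_apply, Matrix.one_apply, Matrix.diagonal_apply, hij]

lemma map_smul_one_sub {R S : Type*} [CommRing R] [CommRing S] (f : R →+* S)
    {ι : Type*} [DecidableEq ι] [Fintype ι] (M : Matrix ι ι R) (x : R) :
    (x • (1 : Matrix ι ι R) - M).map f = f x • (1 : Matrix ι ι S) - M.map f := by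
  ext i j
  by_cases hij : i = j <;> simp [Matrix.one_apply, hij]

lemma det_rect {V E : Type*} [Fintype V] [Fintype E] [DecidableEq V] [DecidableEq E]
    (B : Matrix V E ℝ) (s : ℝ) (hs : s ≠ 0) (k : ℕ) (h : Fintype.card E = Fintype.card V + k) :
    (s • (1 : Matrix E E ℝ) - Bᵀ * B).det
      = s ^ k * (s • (1 : Matrix V V ℝ) - B * Bᵀ).det := by
  have k1 : s • (1 : Matrix E E ℝ) - Bᵀ * B = s • ((1 : Matrix E E ℝ) - s⁻¹ • (Bᵀ * B)) := by
    rw [smul_sub, smul_smul, mul_inv_cancel₀ hs, one_smul]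
  have k2 : s • (1 : Matrix V V ℝ) - B * Bᵀ = s • ((1 : Matrix V V ℝ) - s⁻¹ • (B * Bᵀ)) := by
    rw [smul_sub, smul_smul, mul_inv_cancel₀ hs, one_smul]
  rw [k1, k2, Matrix.det_smul, Matrix.det_smul]
  have h1 : (1 : Matrix E E ℝ) - s⁻¹ • (Bᵀ * B) = 1 + (-(s⁻¹) • Bᵀ) * B := by
    rw [Matrix.smul_mul, neg_smul, ← sub_eq_add_neg]
  have h2 : (1 : Matrix V V ℝ) + B * (-(s⁻¹) • Bᵀ) = 1 - s⁻¹ • (B * Bᵀ) := by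
    rw [Matrix.mul_smul, neg_smul, ← sub_eq_add_neg]
  rw [h1, Matrix.det_one_add_mul_comm, h2, h, pow_add]
  ring

lemma prod_sub_eq_neg_pow {n : ℕ} (q : Fin n → ℂ) (a : ℂ) :
    ∏ i : Fin n, (q i - a) = (-1) ^ n * ∏ i : Fin n, (a - q i) := by
  have : ∀ i : Fin n, q i - a = -1 * (a - q i) := by intro i; ring
  rw [Finset.prod_congr rfl fun i _ => this i, Finset.prod_mul_distrib]
  simp

lemma det_quadratic {ι : Type*} [Fintype ι] [DecidableEq ι] {n : ℕ}
    (hcard : Fintype.card ι = n) (M : Matrix ι ι ℝ) (q : Fin n → ℝ)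
    (hM : ∀ x : ℝ, (x • (1 : Matrix ι ι ℝ) - M).det = ∏ i, (x - q i)) (s t : ℝ) :
    ((s • (1 : Matrix ι ι ℝ) - M) * (t • (1 : Matrix ι ι ℝ) - M) - M).det
      = ∏ i : Fin n, ((t - q i) * (s - q i) - q i) := by
  classical
  set f : ℝ →+* ℂ := algebraMap ℝ ℂ with hf
  set Mc : Matrix ι ι ℂ := M.map f with hMc'
  -- characteristic polynomial of M factors
  have hχ : Matrix.charpoly M = ∏ i : Fin n, (X - Polynomial.C (q i)) := by
    apply Polynomial.funext
    intro x
    rw [eval_charpoly', hM x]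
    simp [Polynomial.eval_prod]
  have hMc : ∀ z : ℂ, (z • (1 : Matrix ι ι ℂ) - Mc).det = ∏ i : Fin n, (z - f (q i)) := by
    intro z
    rw [← eval_charpoly', Matrix.charpoly_map, hχ]
    simp [Polynomial.map_prod, Polynomial.eval_prod]
  have hdet_sub : ∀ a : ℂ, (Mc - a • 1).det = ∏ i : Fin n, (f (q i) - a) := by
    intro a
    have : Mc - a • 1 = -(a • (1 : Matrix ι ι ℂ) - Mc) := (neg_sub _ _).symm
    rw [this, Matrix.det_neg, hMc, hcard, prod_sub_eq_neg_pow]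
  -- roots of the quadratic
  set b : ℂ := f s + f t + 1 with hb
  set c : ℂ := f s * f t with hc
  obtain ⟨w, hw⟩ := IsAlgClosed.exists_pow_nat_eq (b ^ 2 - 4 * c) zero_lt_two
  set α : ℂ := (b + w) / 2 with hα
  set β : ℂ := (b - w) / 2 with hβ
  have hab : α + β = b := by rw [hα, hβ]; ring
  have hmul : α * β = c := by
    rw [hα, hβ]
    linear_combination (-(1:ℂ)/4) * hw
  -- factor the quadratic matrix polynomial
  have hfact : (f s • (1 : Matrix ι ι ℂ) - Mc) * (f t • (1 : Matrix ι ι ℂ) - Mc) - Mc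
      = (Mc - α • 1) * (Mc - β • 1) := by
    have e1 : (f s • (1 : Matrix ι ι ℂ) - Mc) * (f t • (1 : Matrix ι ι ℂ) - Mc)
        = (f s * f t) • 1 - f s • Mc - f t • Mc + Mc * Mc := by
      simp only [sub_mul, mul_sub, Matrix.smul_mul, Matrix.mul_smul, one_mul, mul_one,
        smul_smul]
      module
    have e2 : (Mc - α • 1) * (Mc - β • 1)
        = Mc * Mc - α • Mc - β • Mc + (α * β) • 1 := by
      simp only [sub_mul, mul_sub, Matrix.smul_mul, Matrix.mul_smul, one_mul, mul_one,
        smul_smul]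
      module
    rw [e1, e2, hmul, ← hc]
    have : α • Mc + β • Mc = b • Mc := by rw [← add_smul, hab]
    have hb' : (b : ℂ) • Mc = f s • Mc + f t • Mc + Mc := by
      rw [hb, add_smul, add_smul, one_smul]
    calc (f s * f t) • (1 : Matrix ι ι ℂ) - f s • Mc - f t • Mc + Mc * Mc - Mc
        = Mc * Mc - (f s • Mc + f t • Mc + Mc) + c • 1 := by rw [hc]; abel
      _ = Mc * Mc - b • Mc + c • 1 := by rw [hb']
      _ = Mc * Mc - α • Mc - β • Mc + c • 1 := by rw [← hab, add_smul]; abel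
  -- put everything together over ℂ
  have hdetC : ((f s • (1 : Matrix ι ι ℂ) - Mc) * (f t • (1 : Matrix ι ι ℂ) - Mc) - Mc).det
      = ∏ i : Fin n, ((f t - f (q i)) * (f s - f (q i)) - f (q i)) := by
    rw [hfact, Matrix.det_mul, hdet_sub, hdet_sub, ← Finset.prod_mul_distrib]
    apply Finset.prod_congr rfl
    intro i _
    linear_combination (-(f (q i))) * hab + hmul
  -- transfer to ℝ
  have hcast : f (((s • (1 : Matrix ι ι ℝ) - M) * (t • (1 : Matrix ι ι ℝ) - M) - M).det)
      = ((f s • (1 : Matrix ι ι ℂ) - Mc) * (f t • (1 : Matrix ι ι ℂ) - Mc) - Mc).det := by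
    rw [RingHom.map_det]
    congr 1
    rw [RingHom.mapMatrix_apply]
    have : ((s • (1 : Matrix ι ι ℝ) - M) * (t • (1 : Matrix ι ι ℝ) - M) - M).map f
        = ((s • (1 : Matrix ι ι ℝ) - M).map f) * ((t • (1 : Matrix ι ι ℝ) - M).map f)
            - M.map f := by
      ext i j
      simp [Matrix.sub_apply, Matrix.map_apply, Matrix.mul_apply, map_sub, map_sum, _root_.map_mul]
    rw [this, map_smul_one_sub, map_smul_one_sub]
  have hfp : f (∏ i : Fin n, ((t - q i) * (s - q i) - q i))
      = ∏ i : Fin n, ((f t - f (q i)) * (f s - f (q i)) - f (q i)) := by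
    rw [show f (∏ i : Fin n, ((t - q i) * (s - q i) - q i))
        = ∏ i : Fin n, f ((t - q i) * (s - q i) - q i) from _root_.map_prod f _ _]
    apply Finset.prod_congr rfl
    intro i _
    push_cast [hf]
    simp
  exact f.injective (by rw [hcast, hdetC, hfp])

end DetLemmas

section Schur
open Polynomial

lemma fQ_good_lam {V : Type*} [Fintype V] (G : SimpleGraph V) (r n : ℕ)
    (hreg : G.IsRegularOfDegree r)
    (q : Fin n → ℝ) (hq : ∀ x : ℝ, fQ G x = ∏ i : Fin n, (x - q i))
    (hnV : Fintype.card V = n)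
    (k : ℕ) (hcard : Fintype.card G.edgeSet = Fintype.card V + k) (lam : ℝ)
    (hs0 : lam - 2 * r + 2 ≠ 0)
    (hS0 : (Matrix.charpoly ((incMat G)ᵀ * incMat G)).eval (lam - 2 * r + 2) ≠ 0)
    (hCs0 : (Matrix.charpoly (incMat G * (incMat G)ᵀ)).eval (lam - 2 * r + 2) ≠ 0) :
    fQ (xyzTransform G XYZ.plus XYZ.plus XYZ.plus) lam
      = (lam - 2 * r + 2) ^ k
          * ∏ i : Fin n, ((lam - r - q i) * (lam - 2 * r + 2 - q i) - q i) := by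
  classical
  set B : Matrix V G.edgeSet ℝ := incMat G with hB
  set s : ℝ := lam - 2 * r + 2 with hs
  set C : Matrix V V ℝ := B * Bᵀ with hC
  set P : Matrix V V ℝ := (lam - r) • 1 - C with hP
  set S : Matrix G.edgeSet G.edgeSet ℝ := s • 1 - Bᵀ * B with hSdef
  set Cs : Matrix V V ℝ := s • 1 - C with hCsdef
  have hS : IsUnit S.det := by
    rw [hSdef, ← eval_charpoly']
    exact isUnit_iff_ne_zero.mpr hS0
  have hCs : IsUnit Cs.det := by
    rw [hCsdef, hC, hB, ← eval_charpoly']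
    exact isUnit_iff_ne_zero.mpr hCs0
  have hfq : fQ (xyzTransform G XYZ.plus XYZ.plus XYZ.plus) lam
      = (Matrix.fromBlocks P (-B) (-(Bᵀ)) S).det := by
    rw [block_decomp G hreg lam]
  haveI : Invertible S := S.invertibleOfIsUnitDet hS
  rw [hfq, Matrix.det_fromBlocks₂₂]
  have hinv : ⅟ S = S⁻¹ := Matrix.invOf_eq_nonsing_inv S
  have hBS : Cs * B = B * S := by
    rw [hCsdef, hSdef, Matrix.sub_mul, Matrix.mul_sub, Matrix.smul_mul, Matrix.mul_smul,
      Matrix.one_mul, Matrix.mul_one, hC, Matrix.mul_assoc]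
  have hkey : Cs * (B * S⁻¹ * Bᵀ) = C := by
    have h1 : Cs * (B * S⁻¹ * Bᵀ) = (Cs * B) * (S⁻¹ * Bᵀ) := by
      rw [Matrix.mul_assoc, Matrix.mul_assoc]
    rw [h1, hBS, ← Matrix.mul_assoc, Matrix.mul_nonsing_inv_cancel_right _ _ hS]
  have hBSB : B * S⁻¹ * Bᵀ = Cs⁻¹ * C := by
    rw [← hkey, ← Matrix.mul_assoc, Matrix.nonsing_inv_mul _ hCs, Matrix.one_mul]
  have hneg : -B * ⅟ S * -(Bᵀ) = B * S⁻¹ * Bᵀ := by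
    simp [hinv, Matrix.neg_mul, Matrix.mul_neg]
  rw [hneg, hBSB]
  have hPC : P - Cs⁻¹ * C = Cs⁻¹ * (Cs * P - C) := by
    rw [Matrix.mul_sub, ← Matrix.mul_assoc Cs⁻¹ Cs P, Matrix.nonsing_inv_mul _ hCs,
      Matrix.one_mul]
  rw [hPC, Matrix.det_mul, Matrix.det_nonsing_inv]
  have hdetS : S.det = s ^ k * Cs.det := det_rect B s hs0 k hcard
  have hquad : (Cs * P - C).det
      = ∏ i : Fin n, ((lam - r - q i) * (s - q i) - q i) := by
    have hM : ∀ x : ℝ, (x • (1 : Matrix V V ℝ) - C).det = ∏ i : Fin n, (x - q i) := by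
      intro x
      rw [hC, hB, incMat_mul_transpose, ← fQ, hq x]
    have := det_quadratic hnV C q hM s (lam - r)
    rw [hCsdef, hP]
    exact this
  rw [hdetS, hquad, Ring.inverse_eq_inv']
  have hCs0 : Cs.det ≠ 0 := hCs.ne_zero
  field_simp [hCs0]

end Schur

theorem signless_charpoly_xyz_ppp {V : Type*} [Fintype V] (G : SimpleGraph V) (r n m : ℕ)
    (hn : Fintype.card V = n) (hm : Fintype.card G.edgeSet = m)
    (hreg : G.IsRegularOfDegree r) (hr2 : 2 ≤ r) (hn0 : 0 < n)
    (q : Fin n → ℝ) (hmono : Monotone q)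
    (hlast : q ⟨n - 1, by omega⟩ = 2 * r)
    (hq : ∀ x : ℝ, fQ G x = ∏ i : Fin n, (x - q i)) :
    ∀ lam : ℝ,
      fQ (xyzTransform G XYZ.plus XYZ.plus XYZ.plus) lam =
        (lam - 3 * r + 2) * (lam - 4 * r) * (lam - 2 * r + 2) ^ (m - n) *
          ∏ i : Fin (n - 1), ((lam - r - (q (Fin.castLE (Nat.sub_le n 1) i))) * (lam - 2 * r + 2 - (q (Fin.castLE (Nat.sub_le n 1) i))) - (q (Fin.castLE (Nat.sub_le n 1) i))) := by
  classical
  have hnr : n * r = 2 * m := by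
    have h1 := G.sum_degrees_eq_twice_card_edges
    have h2 : ∑ v : V, G.degree v = n * r := by
      rw [Finset.sum_congr rfl fun v _ => hreg v, Finset.sum_const, smul_eq_mul,
        Finset.card_univ, hn]
    rw [h2, SimpleGraph.edgeFinset_card, hm] at h1
    exact h1
  have h2n : n * 2 ≤ n * r := Nat.mul_le_mul_left n hr2
  have hmn : n ≤ m := by omega
  obtain ⟨k, hk⟩ : ∃ k, m = n + k := ⟨m - n, by omega⟩
  have hcardE : Fintype.card G.edgeSet = Fintype.card V + k := by
    rw [hm, hn]; exact hk
  set T := xyzTransform G XYZ.plus XYZ.plus XYZ.plus with hT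
  set χT := Matrix.charpoly (signlessLaplacian T) with hχT
  set q' : Fin (n - 1) → ℝ := fun i => q (Fin.castLE (Nat.sub_le n 1) i) with hq'
  set RP := (Polynomial.X - Polynomial.C (3 * (r : ℝ)) + Polynomial.C 2) *
      (Polynomial.X - Polynomial.C (4 * (r : ℝ))) *
      (Polynomial.X - Polynomial.C (2 * (r : ℝ)) + Polynomial.C 2) ^ (m - n) *
      ∏ i : Fin (n - 1), ((Polynomial.X - Polynomial.C (r : ℝ) - Polynomial.C (q' i)) *
        (Polynomial.X - Polynomial.C (2 * (r : ℝ)) + Polynomial.C 2 - Polynomial.C (q' i))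
          - Polynomial.C (q' i)) with hRP
  have hevalT : ∀ x : ℝ, χT.eval x = fQ T x := by
    intro x
    rw [hχT, eval_charpoly', fQ]
    congr!
  have hevalR : ∀ x : ℝ, RP.eval x = (x - 3 * r + 2) * (x - 4 * r) *
      (x - 2 * r + 2) ^ (m - n) *
      ∏ i : Fin (n - 1), ((x - r - q' i) * (x - 2 * r + 2 - q' i) - q' i) := by
    intro x
    simp [hRP, Polynomial.eval_prod]
  set Φ := Matrix.charpoly ((incMat G)ᵀ * incMat G) *
      Matrix.charpoly (incMat G * (incMat G)ᵀ) * Polynomial.X with hΦ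
  have hΦ0 : Φ ≠ 0 :=
    (((Matrix.charpoly_monic _).mul (Matrix.charpoly_monic _)).mul Polynomial.monic_X).ne_zero
  have hgood : ∀ lam : ℝ, ¬ Φ.IsRoot (lam - 2 * r + 2) → χT.eval lam = RP.eval lam := by
    intro lam hroot
    simp only [hΦ, Polynomial.IsRoot, Polynomial.eval_mul, Polynomial.eval_X, mul_eq_zero,
      not_or] at hroot
    obtain ⟨⟨h1, h2⟩, h3⟩ := hroot
    rw [hevalT, hT,
      fQ_good_lam G r n hreg q hq hn k hcardE lam h3 h1 h2, hevalR]
    obtain ⟨nn, rfl⟩ : ∃ nn, n = nn + 1 := ⟨n - 1, by omega⟩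
    have hmk : m - (nn + 1) = k := by omega
    rw [Fin.prod_univ_castSucc, hmk]
    have hlast' : q (Fin.last nn) = 2 * r := hlast
    rw [hlast']
    have hsplit : ∏ i : Fin nn,
        ((lam - r - q (Fin.castSucc i)) * (lam - 2 * r + 2 - q (Fin.castSucc i))
          - q (Fin.castSucc i))
        = ∏ i : Fin (nn + 1 - 1), ((lam - r - q' i) * (lam - 2 * r + 2 - q' i) - q' i) := by
      rfl
    rw [hsplit]
    ring
  have hfin : {x : ℝ | Φ.IsRoot (x - 2 * r + 2)}.Finite := by
    have hsub : {x : ℝ | Φ.IsRoot (x - 2 * r + 2)}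
        ⊆ (fun y : ℝ => y + 2 * r - 2) '' {y | Φ.IsRoot y} := by
      intro x hx
      exact ⟨x - 2 * r + 2, hx, by ring⟩
    exact ((Polynomial.finite_setOf_isRoot hΦ0).image _).subset hsub
  have hinf : {x : ℝ | χT.eval x = RP.eval x}.Infinite :=
    (hfin.infinite_compl).mono fun x hx => hgood x hx
  have hpq : χT = RP := Polynomial.eq_of_infinite_eval_eq _ _ hinf
  intro lam
  calc fQ T lam = χT.eval lam := (hevalT lam).symm
    _ = RP.eval lam := by rw [hpq]
    _ = (lam - 3 * r + 2) * (lam - 4 * r) * (lam - 2 * r + 2) ^ (m - n) *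
        ∏ i : Fin (n - 1), ((lam - r - q' i) * (lam - 2 * r + 2 - q' i) - q' i) :=
      hevalR lam
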